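/- Let A, B, C ∈ ℂ and let (x₁, y₁, z₁) ∈ ℂ³ with x₁ ≠ 0 and z₁ ≠ 0 satisfy z₁² = x₁(x₁² + (20A y₁² − 20B y₁ + C) x₁ + 16 y₁⁵). Define y = 2 y₁, u = −(x₁ + 16 y₁⁵/x₁), and v = −i·(u − (5A y² − 10B y + C))·(x₁² − 16 y₁⁵)/z₁, where i = √(−1). Then v² = (u² − 2 y⁵)(u − (5A y² − 10B y + C)). (This is the defining equation of the Kummer surface K(A:B:C) obtained as the quotient of S(A:B:C) by the symplectic involution ι.) -/

import Mathlib

/-- The `G`-invariant coordinates on `S(A:B:C)` satisfy the defining equation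
`v² = (u² − 2y⁵)(u − (5Ay² − 10By + C))` of the Kummer surface `K(A:B:C)`. -/
theorem stmt_5 (A B C : ℂ) (x₁ y₁ z₁ : ℂ) (hx₁ : x₁ ≠ 0) (hz₁ : z₁ ≠ 0)
    (h : z₁ ^ 2 = x₁ * (x₁ ^ 2 + (20 * A * y₁ ^ 2 - 20 * B * y₁ + C) * x₁ + 16 * y₁ ^ 5))
    (y u v : ℂ)
    (hy : y = 2 * y₁)
    (hu : u = -(x₁ + 16 * y₁ ^ 5 / x₁))
    (hv : v = -Complex.I * (u - (5 * A * y ^ 2 - 10 * B * y + C)) *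
      ((x₁ ^ 2 - 16 * y₁ ^ 5) / z₁)) :
    v ^ 2 = (u ^ 2 - 2 * y ^ 5) * (u - (5 * A * y ^ 2 - 10 * B * y + C)) := by
  have hQ : x₁ ^ 2 + (20 * A * y₁ ^ 2 - 20 * B * y₁ + C) * x₁ + 16 * y₁ ^ 5 ≠ 0 := by
    intro h0
    apply hz₁
    have : z₁ ^ 2 = 0 := by rw [h, h0, mul_zero]
    exact pow_eq_zero_iff (n := 2) (by norm_num) |>.mp this
  have hv2 : v ^ 2 = -((u - (5 * A * y ^ 2 - 10 * B * y + C)) ^ 2 *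
      (x₁ ^ 2 - 16 * y₁ ^ 5) ^ 2 / z₁ ^ 2) := by
    rw [hv]
    field_simp
    ring_nf
    rw [Complex.I_sq]
    ring
  rw [hv2, h, hy, hu]
  field_simp
  rw [neg_div', div_eq_iff (by convert hQ using 1; ring)]
  ring
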